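/- Let Λ = Λ(l; p_1, …, p_m) with vertex set V totally ordered by O, let 1 ≤ d ≤ n − m, and let τ be a facet of skel_d(Λ). Then τ is the reverse lexicographically first facet of skel_d(Λ) containing R_O(τ); that is, every facet τ' of skel_d(Λ) with R_O(τ) ⊆ τ' satisfies τ ≤ τ' in the reverse lexicographic order. -/
import Mathlib


open Finset

/-- An (abstract) simplicial complex: a family of finite subsets closed under taking subsets. -/
def IsComplex {V : Type*} (K : Set (Finset V)) : Prop :=
  ∀ s ∈ K, ∀ t, t ⊆ s → t ∈ K

/-- Number of faces of cardinality `i` (that is, `f_{i-1}`). -/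
noncomputable def faceCount {V : Type*} (K : Set (Finset V)) (i : ℕ) : ℕ :=
  {s | s ∈ K ∧ s.card = i}.ncard

/-- `h` is the h-vector of the `(d-1)`-dimensional complex `K`:
`Σ_{i=0}^d h_i x^i = Σ_{i=0}^d f_{i-1} x^i (1-x)^{d-i}`. -/
def IsHVector {V : Type*} (K : Set (Finset V)) (d : ℕ) (h : ℕ → ℤ) : Prop :=
  ∑ i ∈ Finset.range (d + 1), Polynomial.C (h i) * Polynomial.X ^ i =
    ∑ i ∈ Finset.range (d + 1),
      Polynomial.C ((faceCount K i : ℤ)) * Polynomial.X ^ i * (1 - Polynomial.X) ^ (d - i)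

/-- `K` is pure of dimension `d - 1`: nonempty in top dimension, and every face is
contained in a face of cardinality `d`. -/
def IsPureDim {V : Type*} (K : Set (Finset V)) (d : ℕ) : Prop :=
  (∃ s ∈ K, s.card = d) ∧ ∀ s ∈ K, ∃ t ∈ K, s ⊆ t ∧ t.card = d

/-- The facets listed before `τ` in the ordering `L`. -/
def prevFacets {V : Type*} [DecidableEq V] (L : List (Finset V)) (τ : Finset V) :
    List (Finset V) :=
  L.takeWhile (fun τ' => τ' != τ)

/-- `γ` lies in `∪_{j<i} τ̄_j`, the union of the closures of the facets listed before `τ`. -/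
def coveredBefore {V : Type*} [DecidableEq V] (L : List (Finset V)) (τ γ : Finset V) : Prop :=
  ∃ τ' ∈ prevFacets L τ, γ ⊆ τ'

/-- `T_L(τ)`: the set of facets of `τ̄ ∩ (∪_{j<i} τ̄_j)`. -/
def TL {V : Type*} [DecidableEq V] (L : List (Finset V)) (τ : Finset V) : Set (Finset V) :=
  {γ | γ ⊆ τ ∧ coveredBefore L τ γ ∧
    ∀ γ', γ ⊆ γ' → γ' ⊆ τ → coveredBefore L τ γ' → γ' = γ}

/-- `L` is a shelling of the pure `(d-1)`-dimensional complex `K`: it lists the facets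
(faces of cardinality `d`) without repetition, every face of `K` lies under some facet,
and for every non-initial facet `τ` the complex `τ̄ ∩ (∪_{j<i} τ̄_j)` is pure of
dimension `d - 2`. -/
def IsShelling {V : Type*} [DecidableEq V] (K : Set (Finset V)) (d : ℕ)
    (L : List (Finset V)) : Prop :=
  L.Nodup ∧
  (∀ τ, τ ∈ L ↔ τ ∈ K ∧ τ.card = d) ∧
  (∀ s ∈ K, ∃ t ∈ L, s ⊆ t) ∧
  (∀ τ ∈ L, prevFacets L τ ≠ [] →
    IsPureDim {γ | γ ⊆ τ ∧ coveredBefore L τ γ} (d - 1))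

/-- Monomials in `k` variables `x_0 < x_1 < … < x_{k-1}`, recorded by exponent vectors. -/
abbrev Mono (k : ℕ) := Fin k → ℕ

/-- Total degree of a monomial. -/
def mDeg {k : ℕ} (μ : Mono k) : ℕ := ∑ i, μ i

/-- Divisibility of monomials. -/
def mDvd {k : ℕ} (ν μ : Mono k) : Prop := ∀ i, ν i ≤ μ i

/-- `S(a_1, …, a_k)`: monomials whose exponent of `x_i` is at most `a_i ∈ ℕ ∪ {∞}`. -/
def SBound {k : ℕ} (b : Fin k → ℕ∞) : Set (Mono k) :=
  {μ | ∀ i, (μ i : ℕ∞) ≤ b i}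

/-- A multicomplex in `S(b)`: a nonempty set of monomials of `S(b)` closed under divisibility. -/
def IsMulticomplex {k : ℕ} (b : Fin k → ℕ∞) (M : Set (Mono k)) : Prop :=
  M.Nonempty ∧ M ⊆ SBound b ∧ ∀ μ ∈ M, ∀ ν, mDvd ν μ → ν ∈ M

/-- `F_i(M)`: the number of monomials of `M` of total degree `i`. -/
noncomputable def FVec {k : ℕ} (M : Set (Mono k)) (i : ℕ) : ℕ :=
  {μ ∈ M | mDeg μ = i}.ncard

/-- Reverse lexicographic order (within a fixed total degree): `μ < ν` if for some `i`
the exponent of `x_i` in `μ` is smaller and the exponents agree beyond `i`. -/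
def mRlexLt {k : ℕ} (μ ν : Mono k) : Prop :=
  ∃ i, μ i < ν i ∧ ∀ j, i < j → μ j = ν j

/-- The bound vector `(∞^{n-d-m}, p_1 - 1, …, p_m - 1)` on `n - d` variables. -/
def lamBounds (n d m : ℕ) (p : Fin m → ℕ) : Fin (n - d) → ℕ∞ :=
  fun j =>
    if (j : ℕ) < n - d - m then ⊤
    else if h2 : (j : ℕ) - (n - d - m) < m then (((p ⟨(j : ℕ) - (n - d - m), h2⟩ - 1 : ℕ)) : ℕ∞)
    else 0

/-- The vertex set of `Λ(l; p_1, …, p_m)`: a set `V'` of size `l` together with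
disjoint sets `P_i` of sizes `p_i`. -/
abbrev LamVert (l : ℕ) {m : ℕ} (p : Fin m → ℕ) := Fin l ⊕ Σ i : Fin m, Fin (p i)

/-- The vertex block `P_i`. -/
def Pblock (l : ℕ) {m : ℕ} (p : Fin m → ℕ) (i : Fin m) : Finset (LamVert l p) :=
  Finset.univ.image (fun j : Fin (p i) => (Sum.inr ⟨i, j⟩ : LamVert l p))

/-- The faces of `Λ(l; p_1, …, p_m)`: subsets of the vertex set containing no `P_i` entirely. -/
def LambdaFaces (l : ℕ) {m : ℕ} (p : Fin m → ℕ) : Set (Finset (LamVert l p)) :=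
  {F | ∀ i : Fin m, ¬ Pblock l p i ⊆ F}

/-- `full(τ) = {i : |P_i ∩ τ| = |P_i| - 1}`. -/
def fullSet {l m : ℕ} {p : Fin m → ℕ} (τ : Finset (LamVert l p)) : Finset (Fin m) :=
  Finset.univ.filter (fun i => (Pblock l p i ∩ τ).card = p i - 1)

/-- The elements of `P_i` missing from `τ`; a singleton `{miss(τ, i)}` when `i ∈ full(τ)`. -/
def missSet {l m : ℕ} {p : Fin m → ℕ} (τ : Finset (LamVert l p)) (i : Fin m) :
    Finset (LamVert l p) :=
  Pblock l p i \ τ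

/-- Candidates for `s_O(τ)`: vertices not in `τ` and different from each `miss(τ, i)`,
`i ∈ full(τ)`. -/
def sCand {l m : ℕ} {p : Fin m → ℕ} (τ : Finset (LamVert l p)) : Finset (LamVert l p) :=
  Finset.univ.filter (fun v => v ∉ τ ∧ ∀ i ∈ fullSet τ, v ∉ missSet τ i)

/-- The position (with respect to the ordering `e`) of `s_O(τ)`, or `∞` if it does not exist. -/
noncomputable def sPos {l m n : ℕ} {p : Fin m → ℕ} (e : LamVert l p ≃ Fin n)
    (τ : Finset (LamVert l p)) : WithTop (Fin n) :=
  ((sCand τ).image e).min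

/-- `τ_{> s_O(τ)}`. -/
noncomputable def tauAbove {l m n : ℕ} {p : Fin m → ℕ} (e : LamVert l p ≃ Fin n)
    (τ : Finset (LamVert l p)) : Finset (LamVert l p) :=
  τ.filter (fun y => sPos e τ < ((e y : Fin n) : WithTop (Fin n)))

/-- `U_O(τ) = { y ∈ P_i : y > miss(τ, i) for some i ∈ full(τ) }`. -/
def USet {l m n : ℕ} {p : Fin m → ℕ} (e : LamVert l p ≃ Fin n)
    (τ : Finset (LamVert l p)) : Finset (LamVert l p) :=
  Finset.univ.filter
    (fun y => ∃ i ∈ fullSet τ, y ∈ Pblock l p i ∧ ∃ w ∈ missSet τ i, e w < e y)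

/-- `R_O(τ) = τ_{> s_O(τ)} ∪ U_O(τ)`. -/
noncomputable def RSet {l m n : ℕ} {p : Fin m → ℕ} (e : LamVert l p ≃ Fin n)
    (τ : Finset (LamVert l p)) : Finset (LamVert l p) :=
  tauAbove e τ ∪ USet e τ

/-- Reverse lexicographic comparison of two finite vertex sets with respect to the
ordering `e`: `τ < τ'` if the largest vertex in which they differ belongs to `τ'`. -/
def rlexLt {l m n : ℕ} {p : Fin m → ℕ} (e : LamVert l p ≃ Fin n)
    (τ τ' : Finset (LamVert l p)) : Prop :=
  ∃ v, v ∈ τ' ∧ v ∉ τ ∧ ∀ w, e v < e w → (w ∈ τ ↔ w ∈ τ')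

/-- The `d`-skeleton of `Λ`: faces of cardinality at most `d`. -/
def skel (l : ℕ) {m : ℕ} (p : Fin m → ℕ) (d : ℕ) : Set (Finset (LamVert l p)) :=
  {F | F ∈ LambdaFaces l p ∧ F.card ≤ d}

/-- The facets of the `d`-skeleton of `Λ`: faces of cardinality exactly `d`. -/
def skelFacets (l : ℕ) {m : ℕ} (p : Fin m → ℕ) (d : ℕ) : Set (Finset (LamVert l p)) :=
  {F | F ∈ LambdaFaces l p ∧ F.card = d}

/-- `S^d`: the monomials of `S(b)` of total degree at most `d`. -/
def SBoundDeg {k : ℕ} (b : Fin k → ℕ∞) (d : ℕ) : Set (Mono k) :=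
  {μ | μ ∈ SBound b ∧ mDeg μ ≤ d}

lemma mem_Pblock' {l m : ℕ} {p : Fin m → ℕ} {i : Fin m} {x : LamVert l p} :
    x ∈ Pblock l p i ↔ ∃ j : Fin (p i), x = Sum.inr ⟨i, j⟩ := by
  simp [Pblock, eq_comm]

lemma Pblock_eq_of_mem {l m : ℕ} {p : Fin m → ℕ} {i i' : Fin m} {x : LamVert l p}
    (h : x ∈ Pblock l p i) (h' : x ∈ Pblock l p i') : i = i' := by
  obtain ⟨j, rfl⟩ := mem_Pblock'.1 h
  obtain ⟨j', hj'⟩ := mem_Pblock'.1 h'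
  have := Sum.inr.inj hj'
  exact congrArg Sigma.fst this

lemma card_Pblock {l m : ℕ} {p : Fin m → ℕ} (i : Fin m) :
    (Pblock l p i).card = p i := by
  rw [Pblock, Finset.card_image_of_injective]
  · simp
  · intro a b hab
    have := Sum.inr.inj hab
    simpa using (Sigma.mk.inj_iff.1 this).2

lemma missSet_card {l m : ℕ} {p : Fin m → ℕ} (hp : ∀ i, 2 ≤ p i)
    {τ : Finset (LamVert l p)} {i : Fin m} (hi : i ∈ fullSet τ) :
    (missSet τ i).card = 1 := by
  have hcard : (Pblock l p i ∩ τ).card = p i - 1 := by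
    simpa [fullSet] using hi
  have h2 := Finset.card_sdiff_add_card_inter (Pblock l p i) τ
  have hpb := card_Pblock (l := l) (p := p) i
  have := hp i
  unfold missSet
  omega
/-- A facet `τ` of `skel_d(Λ)` is the reverse lexicographically first
facet containing `R_O(τ)`. -/
theorem revlex_first_facet {l m n d : ℕ} (p : Fin m → ℕ)
    (hp : ∀ i, 2 ≤ p i) (hn : n = l + ∑ i, p i)
    (hd1 : 1 ≤ d) (hd2 : d ≤ n - m)
    (e : LamVert l p ≃ Fin n)
    (τ : Finset (LamVert l p)) (hτ : τ ∈ skelFacets l p d) :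
    ∀ τ' ∈ skelFacets l p d, RSet e τ ⊆ τ' → τ = τ' ∨ rlexLt e τ τ' := by
  classical
  intro τ' hτ' hR
  by_cases heq : τ = τ'
  · exact Or.inl heq
  right
  set s : Finset (LamVert l p) := (τ \ τ') ∪ (τ' \ τ) with hs
  have hsne : s.Nonempty := by
    rcases Finset.not_subset.1 (fun hsub => heq (Finset.eq_of_subset_of_card_le hsub
      (hτ'.2.trans hτ.2.symm).le)) with ⟨x, hx1, hx2⟩
    exact ⟨x, by simp [hs, hx1, hx2]⟩
  obtain ⟨v, hv, hvmax⟩ := s.exists_max_image e hsne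
  have hagree : ∀ w, e v < e w → (w ∈ τ ↔ w ∈ τ') := by
    intro w hw
    by_contra hcon
    have hws : w ∈ s := by
      simp only [hs, Finset.mem_union, Finset.mem_sdiff]
      tauto
    exact absurd (hvmax w hws) (not_le.2 hw)
  have hlt : ∀ u ∈ s, u ≠ v → e u < e v :=
    fun u hu hne => lt_of_le_of_ne (hvmax u hu) (fun h => hne (e.injective h))
  have hvmem : v ∈ τ' \ τ := by
    by_contra hvn
    have hvτ : v ∈ τ \ τ' := by
      rcases Finset.mem_union.1 hv with h | h
      · exact h
      · exact absurd h hvn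
    have hvτ1 : v ∈ τ := (Finset.mem_sdiff.1 hvτ).1
    have hvτ2 : v ∉ τ' := (Finset.mem_sdiff.1 hvτ).2
    have hvR : v ∉ RSet e τ := fun h => hvτ2 (hR h)
    have hsP : ((e v : Fin n) : WithTop (Fin n)) ≤ sPos e τ := by
      by_contra h
      exact hvR (Finset.mem_union_left _ (Finset.mem_filter.2 ⟨hvτ1, not_le.1 h⟩))
    -- every element of τ' \ τ is the miss of a full block, and has a companion in τ \ τ'
    have claimB : ∀ u ∈ τ' \ τ, ∃ w, w ∈ τ \ τ' ∧
        (∃ i ∈ fullSet τ, u ∈ missSet τ i ∧ w ∈ Pblock l p i) ∧ e w < e u := by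
      intro u hu
      have huτ : u ∉ τ := (Finset.mem_sdiff.1 hu).2
      have huτ' : u ∈ τ' := (Finset.mem_sdiff.1 hu).1
      have hune : u ≠ v := fun h => (h ▸ huτ) hvτ1
      have hulv : e u < e v := hlt u (Finset.mem_union_right _ hu) hune
      obtain ⟨i, hi, hmiss⟩ : ∃ i ∈ fullSet τ, u ∈ missSet τ i := by
        by_contra hcon
        push_neg at hcon
        have huc : u ∈ sCand τ := by
          simp only [sCand, Finset.mem_filter, Finset.mem_univ, true_and]
          exact ⟨huτ, hcon⟩
        have h1 : sPos e τ ≤ ((e u : Fin n) : WithTop (Fin n)) :=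
          Finset.min_le (Finset.mem_image_of_mem e huc)
        have h2 : ((e u : Fin n) : WithTop (Fin n)) < ((e v : Fin n) : WithTop (Fin n)) := by
          exact_mod_cast hulv
        exact absurd h2 (not_lt.2 (hsP.trans h1))
      obtain ⟨w, hwP, hwτ'⟩ := Finset.not_subset.1 (hτ'.1 i)
      have hwne : w ≠ u := fun h => hwτ' (h ▸ huτ')
      have hwτ : w ∈ τ := by
        by_contra hwn
        have : w ∈ missSet τ i := Finset.mem_sdiff.2 ⟨hwP, hwn⟩
        exact hwne (Finset.card_le_one.1 (missSet_card hp hi).le w this u hmiss)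
      have hwlt : e w < e u := by
        rcases lt_trichotomy (e w) (e u) with h | h | h
        · exact h
        · exact absurd (e.injective h) hwne
        · exfalso
          have hwU : w ∈ USet e τ := by
            simp only [USet, Finset.mem_filter, Finset.mem_univ, true_and]
            exact ⟨i, hi, hwP, u, hmiss, h⟩
          exact hwτ' (hR (Finset.mem_union_right _ hwU))
      exact ⟨w, Finset.mem_sdiff.2 ⟨hwτ, hwτ'⟩, ⟨i, hi, hmiss, hwP⟩, hwlt⟩
    -- choice function and counting
    set f : LamVert l p → LamVert l p := fun u =>
      if h : u ∈ τ' \ τ then (claimB u h).choose else u with hf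
    have hfspec : ∀ u (h : u ∈ τ' \ τ), f u ∈ τ \ τ' ∧
        (∃ i ∈ fullSet τ, u ∈ missSet τ i ∧ f u ∈ Pblock l p i) ∧ e (f u) < e u := by
      intro u h
      simp only [hf, dif_pos h]
      exact (claimB u h).choose_spec
    have hmaps : ∀ u ∈ τ' \ τ, f u ∈ (τ \ τ').erase v := by
      intro u hu
      obtain ⟨h1, _, h3⟩ := hfspec u hu
      refine Finset.mem_erase.2 ⟨?_, h1⟩
      intro hfeq
      have hune : u ≠ v := fun h => (h ▸ (Finset.mem_sdiff.1 hu).2) hvτ1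
      have hulv : e u < e v := hlt u (Finset.mem_union_right _ hu) hune
      rw [hfeq] at h3
      exact absurd (h3.trans hulv) (lt_irrefl _)
    have hinj : ∀ u ∈ τ' \ τ, ∀ u' ∈ τ' \ τ, f u = f u' → u = u' := by
      intro u hu u' hu' hfeq
      obtain ⟨_, ⟨i, hi, hmi, hPi⟩, _⟩ := hfspec u hu
      obtain ⟨_, ⟨i', hi', hmi', hPi'⟩, _⟩ := hfspec u' hu'
      have : i = i' := Pblock_eq_of_mem hPi (hfeq ▸ hPi')
      subst this
      exact Finset.card_le_one.1 (missSet_card hp hi).le u hmi u' hmi'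
    have hcard1 : (τ' \ τ).card ≤ ((τ \ τ').erase v).card :=
      Finset.card_le_card_of_injOn f hmaps hinj
    have hcard2 : ((τ \ τ').erase v).card = (τ \ τ').card - 1 :=
      Finset.card_erase_of_mem hvτ
    have hcard3 : (τ \ τ').card = (τ' \ τ).card :=
      Finset.card_sdiff_comm (hτ.2.trans hτ'.2.symm)
    have hpos : 0 < (τ \ τ').card := Finset.card_pos.2 ⟨v, hvτ⟩
    omega
  exact ⟨v, (Finset.mem_sdiff.1 hvmem).1, (Finset.mem_sdiff.1 hvmem).2, hagree⟩
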